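/- For the full (unrestricted) language W_{n+1} = A^{n+1} over an ordered alphabet A, the subgraph T of the de Bruijn graph of span n — consisting of the maximal-label outgoing arc of each vertex other than the maximal vertex m = a_max^n — is a spanning tree converging to m; consequently the minimal (greedy smallest-label) walk starting at m is an Eulerian circuit. -/
import Mathlib


/-- One step in the de Bruijn graph of span `n`. -/
def dbStep {A : Type*} (u : List A) (b : A) : List A := u.tail ++ [b]

/-- The vertex reached after the first `i` steps of the walk with label `s` starting
at vertex `m`. -/
def dbVtx {A : Type*} (m s : List A) (i : ℕ) : List A := (s.take i).foldl dbStep m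

lemma foldl_dbStep_length {A : Type*} (n : ℕ) (hn : 0 < n) (l : List A) :
    ∀ u : List A, u.length = n → (l.foldl dbStep u).length = n := by
  induction l with
  | nil => intro u h; simpa
  | cons b l ih =>
    intro u h
    simp only [List.foldl_cons]
    apply ih
    have hu : u ≠ [] := by intro h0; rw [h0] at h; simp at h; omega
    simp [dbStep, List.length_tail]
    omega

lemma dbVtx_succ {A : Type*} (m s : List A) (i : ℕ) (hi : i < s.length) :
    dbVtx m s (i+1) = dbStep (dbVtx m s i) (s.get ⟨i, hi⟩) := by
  unfold dbVtx
  rw [List.take_succ, List.getElem?_eq_getElem hi, List.foldl_append]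
  rfl

lemma headI_cons_tail {A : Type*} [Inhabited A] (l : List A) (h : l ≠ []) :
    l.headI :: l.tail = l := by cases l; simp at h; rfl

/-- Unrestricted case: for the full language `W_{n+1} = A^{n+1}` over an ordered alphabet,
the subgraph `T` of the de Bruijn graph of span `n` — consisting of the maximal-label
outgoing arc of each vertex other than the maximal vertex `m = amax^n` (namely the arc to
the suffix of `v ++ [amax]`) — is a spanning tree converging to `m`; consequently the
minimal (greedy smallest-label) walk starting at `m` is an Eulerian circuit. -/
theorem unrestricted_minimal_walk_eulerian {A : Type*} [LinearOrder A] [Fintype A]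
    (n : ℕ) (hn : 0 < n) (amax : A) (hamax : ∀ a : A, a ≤ amax)
    (s : List A)
    -- s is the label of a walk starting at m = amax^n which never repeats an arc ...
    (honce : ∀ i j (hi : i < s.length) (hj : j < s.length),
      dbVtx (List.replicate n amax) s i = dbVtx (List.replicate n amax) s j →
      s.get ⟨i, hi⟩ = s.get ⟨j, hj⟩ → i = j)
    -- ... always takes the unvisited arc of minimal label ...
    (hmin : ∀ i (hi : i < s.length), ∀ b : A,
      (∀ j (hj : j < i), ¬(dbVtx (List.replicate n amax) s j = dbVtx (List.replicate n amax) s i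
        ∧ s.get ⟨j, by omega⟩ = b)) →
      s.get ⟨i, hi⟩ ≤ b)
    -- ... and stops only when every outgoing arc of the final vertex has been used
    (hstop : ∀ b : A, ∃ (j : ℕ) (hj : j < s.length),
      dbVtx (List.replicate n amax) s j = dbVtx (List.replicate n amax) s s.length ∧
      s.get ⟨j, hj⟩ = b) :
    -- T is a spanning tree converging to m ...
    (∀ u : List A, u.length = n → Relation.ReflTransGen
      (fun x y => x.length = n ∧ x ≠ List.replicate n amax ∧ y = x.tail ++ [amax])
      u (List.replicate n amax)) ∧
    -- ... and the minimal walk is an Eulerian circuit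
    ((∀ u : List A, u.length = n → ∀ b : A,
        ∃ (i : ℕ) (hi : i < s.length), dbVtx (List.replicate n amax) s i = u ∧
          s.get ⟨i, hi⟩ = b) ∧
      s.foldl dbStep (List.replicate n amax) = List.replicate n amax) := by
  classical
  letI : Inhabited A := ⟨amax⟩
  set m : List A := List.replicate n amax with hm
  have hmlen : m.length = n := by simp [hm]
  set L := s.length with hL
  set V : ℕ → List A := dbVtx m s with hV
  have hVlen : ∀ i, (V i).length = n := fun i => foldl_dbStep_length n hn _ _ hmlen
  have hVne : ∀ i, V i ≠ [] := by
    intro i h0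
    have := hVlen i; rw [h0] at this; simp at this; omega
  have hV0 : V 0 = m := by simp [hV, dbVtx]
  have hVsucc : ∀ i (hi : i < L), V (i+1) = dbStep (V i) (s.get ⟨i, hi⟩) :=
    fun i hi => dbVtx_succ m s i hi
  -- Part 1: spanning tree
  have tree : ∀ u : List A, u.length = n → Relation.ReflTransGen
      (fun x y => x.length = n ∧ x ≠ m ∧ y = x.tail ++ [amax]) u m := by
    have aux : ∀ j, ∀ u : List A, u.length = n → u.drop j = m.drop j →
        Relation.ReflTransGen (fun x y => x.length = n ∧ x ≠ m ∧ y = x.tail ++ [amax]) u m := by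
      intro j
      induction j with
      | zero => intro u hu hd; simp at hd; rw [hd]
      | succ j ih =>
        intro u hu hd
        by_cases hum : u = m
        · rw [hum]
        · have hune : u ≠ [] := by intro h0; rw [h0] at hu; simp at hu; omega
          refine Relation.ReflTransGen.head ⟨hu, hum, rfl⟩ (ih (u.tail ++ [amax]) ?_ ?_)
          · (simp [List.length_tail, hu]; omega)
          · by_cases hjn : j < n
            · rw [List.drop_append_of_le_length (by simp [List.length_tail, hu]; omega)]
              rw [← List.drop_one, List.drop_drop]
              have h1 : 1 + j = j + 1 := by omega
              rw [h1, hd]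
              simp [hm, List.drop_replicate]
              rw [← List.replicate_succ']
              congr 1
              omega
            · rw [List.drop_eq_nil_of_le, List.drop_eq_nil_of_le]
              · simp [hmlen]; omega
              · simp [List.length_tail, hu]; omega
    intro u hu
    exact aux n u hu (by rw [List.drop_eq_nil_of_le (le_of_eq hu),
      List.drop_eq_nil_of_le (le_of_eq hmlen)])
  -- counting machinery
  have hcardA : 0 < Fintype.card A := Fintype.card_pos_iff.mpr ⟨amax⟩
  set F : ℕ → A := fun i => s.getD i amax with hF
  have hFget : ∀ i (hi : i < L), F i = s.get ⟨i, hi⟩ := by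
    intro i hi; simp [hF, List.getD, List.getElem?_eq_getElem hi, List.get_eq_getElem]
  set E : List A → Finset ℕ := fun f => (Finset.range L).filter (fun i => V i = f) with hE
  set N : List A → Finset ℕ := fun f => (Finset.Ico 1 (L+1)).filter (fun i => V i = f) with hN
  set G : ℕ → A := fun i => (V (i-1)).headI with hG
  -- basic count identity
  have count : ∀ f, (E f).card + (if V L = f then 1 else 0)
      = (N f).card + (if V 0 = f then 1 else 0) := by
    intro f
    have d1 : ((Finset.range (L+1)).filter (fun i => V i = f)).card
        = (E f).card + (if V L = f then 1 else 0) := by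
      by_cases h : V L = f
      · rw [Finset.range_add_one, Finset.filter_insert, if_pos h,
          Finset.card_insert_of_notMem (by simp [hE]), if_pos h]
      · rw [Finset.range_add_one, Finset.filter_insert, if_neg h, if_neg h]
        simp [hE]
    have d2 : ((Finset.range (L+1)).filter (fun i => V i = f)).card
        = (N f).card + (if V 0 = f then 1 else 0) := by
      have hr : Finset.range (L+1) = insert 0 (Finset.Ico 1 (L+1)) := by
        ext x; simp; omega
      by_cases h : V 0 = f
      · rw [hr, Finset.filter_insert, if_pos h,
          Finset.card_insert_of_notMem (by simp [hN]), if_pos h]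
      · rw [hr, Finset.filter_insert, if_neg h, if_neg h]
        simp [hN]
    rw [← d1, ← d2]
  -- injectivity of labels on exits
  have labinj : ∀ f : List A, Set.InjOn F (E f) := by
    intro f i hi j hj hij
    simp only [hE, Finset.coe_filter, Set.mem_setOf_eq, Finset.mem_range] at hi hj
    exact honce i j hi.1 hj.1 (by rw [hi.2, hj.2]) (by rw [← hFget i hi.1, ← hFget j hj.1, hij])
  have Ecard_le : ∀ f, (E f).card ≤ Fintype.card A := by
    intro f
    have := Finset.card_le_card_of_injOn F (fun x _ => Finset.mem_univ (F x)) (labinj f)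
    simpa using this
  have Ecard_eq : ∀ f, (∀ b : A, ∃ i, ∃ hi : i < L, V i = f ∧ s.get ⟨i, hi⟩ = b) →
      (E f).card = Fintype.card A := by
    intro f hfull
    have himg : (E f).image F = Finset.univ := by
      apply Finset.eq_univ_of_forall
      intro b
      obtain ⟨i, hi, hvi, hlab⟩ := hfull b
      exact Finset.mem_image.mpr ⟨i, by simp [hE, hi, hvi], by rw [hFget i hi, hlab]⟩
    rw [← Finset.card_image_of_injOn (labinj f), himg, Finset.card_univ]
  -- entry analysis
  have entry : ∀ f i, i ∈ N f → ∃ hi : i - 1 < L,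
      (V (i-1)).tail ++ [s.get ⟨i-1, hi⟩] = f := by
    intro f i hi
    simp only [hN, Finset.mem_filter, Finset.mem_Ico] at hi
    obtain ⟨⟨h1, h2⟩, hvf⟩ := hi
    have hlt : i - 1 < L := by omega
    refine ⟨hlt, ?_⟩
    have := hVsucc (i-1) hlt
    rw [Nat.sub_add_cancel h1] at this
    rw [← hvf, this]; rfl
  have headinj : ∀ f : List A, Set.InjOn G (N f) := by
    intro f i hi j hj hij
    obtain ⟨hi', heqi⟩ := entry f i hi
    obtain ⟨hj', heqj⟩ := entry f j hj
    have htails : (V (i-1)).tail = (V (j-1)).tail ∧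
        ([s.get ⟨i-1, hi'⟩] : List A) = [s.get ⟨j-1, hj'⟩] := by
      apply List.append_inj (heqi.trans heqj.symm)
      rw [List.length_tail, List.length_tail, hVlen, hVlen]
    have hij' : (V (i-1)).headI = (V (j-1)).headI := hij
    have hvv : V (i-1) = V (j-1) := by
      rw [← headI_cons_tail (V (i-1)) (hVne _), ← headI_cons_tail (V (j-1)) (hVne _)]
      rw [htails.1, hij']
    have hll : s.get ⟨i-1, hi'⟩ = s.get ⟨j-1, hj'⟩ := by
      simpa using htails.2
    have := honce (i-1) (j-1) hi' hj' hvv hll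
    simp only [hN, Finset.coe_filter, Set.mem_setOf_eq, Finset.mem_Ico] at hi hj
    omega
  have Ncard_le : ∀ f, (N f).card ≤ Fintype.card A := by
    intro f
    have := Finset.card_le_card_of_injOn G (fun x _ => Finset.mem_univ (G x)) (headinj f)
    simpa using this
  -- final vertex is m
  have hfinal : V L = m := by
    by_contra hne
    have hfull : ∀ b : A, ∃ i, ∃ hi : i < L, V i = V L ∧ s.get ⟨i, hi⟩ = b := by
      intro b; obtain ⟨j, hj, h1, h2⟩ := hstop b; exact ⟨j, hj, h1, h2⟩
    have hEc := Ecard_eq (V L) hfull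
    have hc := count (V L)
    rw [if_pos rfl, if_neg (by rw [hV0]; exact fun h => hne h.symm)] at hc
    have := Ncard_le (V L)
    omega
  -- P : all out-arcs used
  set P : List A → Prop := fun u => ∀ b : A,
      ∃ i, ∃ hi : i < L, V i = u ∧ s.get ⟨i, hi⟩ = b with hP
  have hPm : P m := by
    intro b
    obtain ⟨j, hj, h1, h2⟩ := hstop b
    exact ⟨j, hj, by rw [h1]; exact hfinal, h2⟩
  have amax_all : ∀ u i (hi : i < L), V i = u → s.get ⟨i, hi⟩ = amax → P u := by
    intro u i hi hVi hlab b
    by_cases hb : b = amax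
    · exact ⟨i, hi, hVi, by rw [hlab, hb]⟩
    · have hnb : ¬ (∀ j (hj : j < i), ¬(V j = V i ∧ s.get ⟨j, by omega⟩ = b)) := by
        intro hall
        have := hmin i hi b hall
        rw [hlab] at this
        exact hb (le_antisymm (hamax b) this)
      push_neg at hnb
      obtain ⟨j, hj, h1, h2⟩ := hnb
      exact ⟨j, by omega, by rw [h1, hVi], h2⟩
  have step_back : ∀ u v : List A, u.length = n → v = u.tail ++ [amax] → P v → P u := by
    intro u v hu hv hPv
    have hune : u ≠ [] := by intro h0; rw [h0] at hu; simp at hu; omega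
    have hEc : (E v).card = Fintype.card A := Ecard_eq v hPv
    have hc := count v
    rw [hfinal, hV0] at hc
    have hNc : (N v).card = Fintype.card A := by
      split at hc <;> omega
    have himg : (N v).image G = Finset.univ := by
      apply Finset.eq_univ_of_card
      rw [Finset.card_image_of_injOn (headinj v), hNc]
    have := himg ▸ Finset.mem_univ u.headI
    obtain ⟨i, hiN, hGi⟩ := Finset.mem_image.mp this
    obtain ⟨hi', heqi⟩ := entry v i hiN
    -- v = (V(i-1)).tail ++ [s[i-1]] = u.tail ++ [amax]
    have htails : (V (i-1)).tail = u.tail ∧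
        ([s.get ⟨i-1, hi'⟩] : List A) = [amax] := by
      apply List.append_inj (heqi.trans hv)
      rw [List.length_tail, List.length_tail, hVlen, hu]
    have hGi' : (V (i-1)).headI = u.headI := hGi
    have hvu : V (i-1) = u := by
      rw [← headI_cons_tail (V (i-1)) (hVne _), ← headI_cons_tail u hune, htails.1, hGi']
    exact amax_all u (i-1) hi' hvu (by simpa using htails.2)
  have Pall : ∀ u : List A, u.length = n → P u := by
    intro u hu
    refine Relation.ReflTransGen.head_induction_on (tree u hu) hPm ?_
    intro a c hr _ ih
    exact step_back a c hr.1 hr.2.2 ih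
  refine ⟨tree, fun u hu b => Pall u hu b, ?_⟩
  have : V L = s.foldl dbStep m := by simp [hV, dbVtx, hL]
  rw [← this]
  exact hfinal
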